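/- arXiv:2010.10604 — 2 statements merged into one kernel-verified Lean document; each statement's English description precedes it below -/
import Mathlib

section
/- Analytic KL divergence from Gamma to Weibull: for k > 0, λ > 0, α > 0, β > 0, KL( Weibull(k, λ) || Gamma(α, β) ) = (γα)/k − α log λ + log k + βλ Γ(1 + 1/k) − γ − 1 − α log β + log Γ(α), where γ is the Euler–Mascheroni constant and Γ is the gamma function. -/
open MeasureTheory Real Set

lemma abs_log_le_aux {x : ℝ} (hx : 0 < x) :
    |Real.log x| ≤ 2 * x ^ ((1:ℝ)/2) + 2 * x ^ (-(1:ℝ)/2) := by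
  have h1 : Real.log x ≤ 2 * x ^ ((1:ℝ)/2) := by
    have := Real.log_le_sub_one_of_pos (Real.rpow_pos_of_pos hx ((1:ℝ)/2))
    rw [Real.log_rpow hx] at this
    nlinarith [Real.rpow_pos_of_pos hx ((1:ℝ)/2)]
  have h2 : -Real.log x ≤ 2 * x ^ (-(1:ℝ)/2) := by
    have := Real.log_le_sub_one_of_pos (Real.rpow_pos_of_pos hx (-(1:ℝ)/2))
    rw [Real.log_rpow hx] at this
    nlinarith [Real.rpow_pos_of_pos hx (-(1:ℝ)/2)]
  have p1 : (0:ℝ) ≤ x ^ ((1:ℝ)/2) := (Real.rpow_pos_of_pos hx _).le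
  have p2 : (0:ℝ) ≤ x ^ (-(1:ℝ)/2) := (Real.rpow_pos_of_pos hx _).le
  rw [abs_le]; constructor <;> nlinarith

lemma integrable_exp_neg_mul_log :
    IntegrableOn (fun x : ℝ => Real.exp (-x) * Real.log x) (Ioi 0) := by
  have i1 : IntegrableOn (fun x : ℝ => Real.exp (-x) * x ^ (-(1:ℝ)/2)) (Ioi 0) := by
    have h := Real.GammaIntegral_convergent (by norm_num : (0:ℝ) < 1/2)
    refine h.congr_fun (fun x hx => ?_) measurableSet_Ioi
    norm_num
  have i2 : IntegrableOn (fun x : ℝ => Real.exp (-x) * x ^ ((1:ℝ)/2)) (Ioi 0) := by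
    have h := Real.GammaIntegral_convergent (by norm_num : (0:ℝ) < 3/2)
    refine h.congr_fun (fun x hx => ?_) measurableSet_Ioi
    norm_num
  refine Integrable.mono' ((i2.const_mul 2).add (i1.const_mul 2)) ?_ ?_
  · exact ((Real.measurable_exp.comp measurable_neg).mul Real.measurable_log).aestronglyMeasurable
  · filter_upwards [ae_restrict_mem measurableSet_Ioi] with x hx
    have hx0 : (0:ℝ) < x := hx
    have hb := abs_log_le_aux hx0
    have he : (0:ℝ) < Real.exp (-x) := Real.exp_pos _
    rw [norm_mul, Real.norm_eq_abs, Real.norm_eq_abs, abs_of_pos he]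
    calc Real.exp (-x) * |Real.log x|
        ≤ Real.exp (-x) * (2 * x ^ ((1:ℝ)/2) + 2 * x ^ (-(1:ℝ)/2)) := by
          exact mul_le_mul_of_nonneg_left hb he.le
      _ = 2 * (Real.exp (-x) * x ^ ((1:ℝ)/2)) + 2 * (Real.exp (-x) * x ^ (-(1:ℝ)/2)) := by ring

lemma integral_exp_neg_mul_log :
    ∫ x in Ioi (0:ℝ), Real.exp (-x) * Real.log x = -Real.eulerMascheroniConstant := by
  have h1 : HasDerivAt Complex.GammaIntegral
      (∫ t : ℝ in Ioi 0, (t:ℂ) ^ ((1:ℂ) - 1) * (Real.log t * Real.exp (-t))) 1 :=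
    Complex.hasDerivAt_GammaIntegral (by norm_num)
  have hopen : IsOpen {s : ℂ | 0 < s.re} := isOpen_lt continuous_const Complex.continuous_re
  have heq : Complex.Gamma =ᶠ[nhds (1:ℂ)] Complex.GammaIntegral := by
    filter_upwards [hopen.mem_nhds (by norm_num : (1:ℂ) ∈ {s : ℂ | 0 < s.re})] with s hs
    exact Complex.Gamma_eq_integral hs
  have h2 : HasDerivAt Complex.Gamma
      (∫ t : ℝ in Ioi 0, (t:ℂ) ^ ((1:ℂ) - 1) * (Real.log t * Real.exp (-t))) 1 :=
    h1.congr_of_eventuallyEq heq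
  have h3 : (∫ t : ℝ in Ioi 0, (t:ℂ) ^ ((1:ℂ) - 1) * (Real.log t * Real.exp (-t)))
      = (-(Real.eulerMascheroniConstant : ℂ)) := h2.unique Complex.hasDerivAt_Gamma_one
  have h4 : (∫ t : ℝ in Ioi 0, (t:ℂ) ^ ((1:ℂ) - 1) * (Real.log t * Real.exp (-t)))
      = ∫ t in Ioi (0:ℝ), ((Real.exp (-t) * Real.log t : ℝ) : ℂ) := by
    refine setIntegral_congr_fun measurableSet_Ioi fun t ht => ?_
    simp only [sub_self, Complex.cpow_zero, one_mul]
    push_cast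
    ring
  have cc : ∀ r : ℝ, (r : ℂ) = @RCLike.ofReal ℂ _ r := fun r => rfl
  rw [h4] at h3
  simp_rw [cc] at h3
  rw [_root_.integral_ofReal, ← cc] at h3
  simpa using congrArg Complex.re h3

/-- The Weibull density with shape `k > 0` and scale `lam > 0`, supported on `(0, ∞)`. -/
noncomputable def weibullPDF (k lam : ℝ) (x : ℝ) : ℝ :=
  if 0 < x then (k / lam ^ k) * x ^ (k - 1) * Real.exp (-(x / lam) ^ k) else 0

/-- The Gamma density with shape `a > 0` and rate `b > 0`, supported on `(0, ∞)`. -/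
noncomputable def gammaPDF' (a b : ℝ) (x : ℝ) : ℝ :=
  if 0 < x then (b ^ a / Real.Gamma a) * x ^ (a - 1) * Real.exp (-(b * x)) else 0

/-- Analytic KL divergence from a Gamma distribution to a Weibull distribution. -/
theorem kl_weibull_gamma (k lam a b : ℝ) (hk : 0 < k) (hlam : 0 < lam)
    (ha : 0 < a) (hb : 0 < b) :
    ∫ x in Ioi (0 : ℝ),
        weibullPDF k lam x * (Real.log (weibullPDF k lam x) - Real.log (gammaPDF' a b x))
      = Real.eulerMascheroniConstant * a / k - a * Real.log lam + Real.log k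
          + b * lam * Real.Gamma (1 + 1 / k) - Real.eulerMascheroniConstant - 1
          - a * Real.log b + Real.log (Real.Gamma a) := by
  have hlk : (0:ℝ) < lam ^ k := Real.rpow_pos_of_pos hlam k
  have hΓa : 0 < Real.Gamma a := Real.Gamma_pos_of_pos ha
  set C1 : ℝ := Real.log k - a * Real.log lam - a * Real.log b + Real.log (Real.Gamma a)
    with hC1
  set g : ℝ → ℝ :=
    fun u => C1 + (k - a) / k * Real.log u + b * lam * u ^ (1/k : ℝ) - u with hg
  set f : ℝ → ℝ := fun u => Real.exp (-u) * g u with hf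
  set F : ℝ → ℝ := fun y => k * y ^ (k - 1) * f (y ^ k) with hF
  -- Step 1: rewrite the integrand
  have step1 : ∫ x in Ioi (0 : ℝ),
        weibullPDF k lam x * (Real.log (weibullPDF k lam x) - Real.log (gammaPDF' a b x))
      = ∫ x in Ioi (0:ℝ), lam⁻¹ * F (lam⁻¹ * x) := by
    refine setIntegral_congr_fun measurableSet_Ioi fun x hx => ?_
    have hx0 : (0:ℝ) < x := hx
    have hxk : (0:ℝ) < x ^ (k-1) := Real.rpow_pos_of_pos hx0 _
    have hy : (0:ℝ) < x / lam := div_pos hx0 hlam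
    have hu : (0:ℝ) < (x / lam) ^ k := Real.rpow_pos_of_pos hy k
    have hxak : (0:ℝ) < x ^ (a-1) := Real.rpow_pos_of_pos hx0 _
    have hba : (0:ℝ) < b ^ a := Real.rpow_pos_of_pos hb a
    have hlogw : Real.log (weibullPDF k lam x)
        = Real.log k - k * Real.log lam + (k-1) * Real.log x - (x/lam)^k := by
      rw [weibullPDF, if_pos hx0, Real.log_mul (by positivity) (by positivity),
        Real.log_mul (by positivity) (by positivity), Real.log_div hk.ne' hlk.ne',
        Real.log_rpow hlam, Real.log_rpow hx0, Real.log_exp]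
      ring
    have hlogg : Real.log (gammaPDF' a b x)
        = a * Real.log b - Real.log (Real.Gamma a) + (a-1) * Real.log x - b * x := by
      rw [gammaPDF', if_pos hx0, Real.log_mul (by positivity) (by positivity),
        Real.log_mul (by positivity) (by positivity), Real.log_div hba.ne' hΓa.ne',
        Real.log_rpow hb, Real.log_rpow hx0, Real.log_exp]
      ring
    have hyx : lam⁻¹ * x = x / lam := by rw [div_eq_mul_inv, mul_comm]
    have e1 : (x / lam) ^ (k-1) = x ^ (k-1) / lam ^ (k-1) := Real.div_rpow hx0.le hlam.le _
    have e2 : lam ^ (k-1) * lam = lam ^ k := by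
      rw [← Real.rpow_add_one hlam.ne' (k-1)]
      norm_num
    have e3 : Real.log ((x/lam) ^ k) = k * (Real.log x - Real.log lam) := by
      rw [Real.log_rpow hy, Real.log_div hx0.ne' hlam.ne']
    have e4 : ((x/lam) ^ k) ^ (1/k : ℝ) = x / lam := by
      rw [← Real.rpow_mul hy.le, mul_one_div, div_self hk.ne', Real.rpow_one]
    rw [hlogw, hlogg, weibullPDF, if_pos hx0, hF, hyx]
    simp only [hf, hg, e3, e4, e1]
    rw [hC1]
    have hlam1 : lam ^ (k-1) ≠ 0 := (Real.rpow_pos_of_pos hlam _).ne'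
    field_simp
    rw [← e2]
    ring
  rw [step1]
  -- Step 2: substitution
  have step2 : ∫ x in Ioi (0:ℝ), lam⁻¹ * F (lam⁻¹ * x) = ∫ u in Ioi (0:ℝ), f u := by
    rw [integral_const_mul,
      integral_comp_mul_left_Ioi F 0 (inv_pos.mpr hlam), mul_zero, inv_inv, smul_eq_mul,
      ← mul_assoc, inv_mul_cancel₀ hlam.ne', one_mul, ← integral_comp_rpow_Ioi f hk.ne']
    refine setIntegral_congr_fun measurableSet_Ioi fun y hy => ?_
    simp only [hF, abs_of_pos hk, smul_eq_mul, mul_assoc]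
  rw [step2]
  -- Step 3: evaluate the integral
  have hsk : (0:ℝ) < 1 + 1/k := by positivity
  have J0 : IntegrableOn (fun u : ℝ => Real.exp (-u)) (Ioi 0) := by
    have := exp_neg_integrableOn_Ioi 0 (zero_lt_one (α := ℝ))
    simpa using this
  have J1 : IntegrableOn (fun u : ℝ => Real.exp (-u) * Real.log u) (Ioi 0) :=
    integrable_exp_neg_mul_log
  have J2 : IntegrableOn (fun u : ℝ => Real.exp (-u) * u ^ (1/k : ℝ)) (Ioi 0) := by
    have h := Real.GammaIntegral_convergent hsk
    refine h.congr_fun (fun u hu => ?_) measurableSet_Ioi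
    norm_num
  have J3 : IntegrableOn (fun u : ℝ => Real.exp (-u) * u) (Ioi 0) := by
    have h := Real.GammaIntegral_convergent (by norm_num : (0:ℝ) < 2)
    refine h.congr_fun (fun u hu => ?_) measurableSet_Ioi
    norm_num
  have I0 : ∫ u in Ioi (0:ℝ), Real.exp (-u) = 1 := integral_exp_neg_Ioi_zero
  have I1 : ∫ u in Ioi (0:ℝ), Real.exp (-u) * Real.log u = -Real.eulerMascheroniConstant :=
    integral_exp_neg_mul_log
  have I2 : ∫ u in Ioi (0:ℝ), Real.exp (-u) * u ^ (1/k : ℝ) = Real.Gamma (1 + 1/k) := by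
    rw [Real.Gamma_eq_integral hsk]
    refine setIntegral_congr_fun measurableSet_Ioi fun u hu => ?_
    norm_num
  have I3 : ∫ u in Ioi (0:ℝ), Real.exp (-u) * u = 1 := by
    have h2 := Real.Gamma_eq_integral (by norm_num : (0:ℝ) < 2)
    rw [Real.Gamma_two] at h2
    rw [h2]
    refine setIntegral_congr_fun measurableSet_Ioi fun u hu => ?_
    norm_num
  have hsplit : f = fun u => C1 * Real.exp (-u) + (k - a) / k * (Real.exp (-u) * Real.log u)
      + b * lam * (Real.exp (-u) * u ^ (1/k : ℝ)) - Real.exp (-u) * u := by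
    funext u
    simp only [hf, hg]
    ring
  rw [hsplit, integral_sub (by exact ((J0.const_mul _).add (J1.const_mul _)).add (J2.const_mul _)) J3,
    integral_add (by exact (J0.const_mul _).add (J1.const_mul _)) (J2.const_mul _),
    integral_add (J0.const_mul _) (J1.const_mul _),
    integral_const_mul, integral_const_mul,
    integral_const_mul, I0, I1, I2, I3, hC1]
  field_simp
  ring
end

section
/- Cross-entropy of the Weibull distribution against a Gamma density: for k > 0, λ > 0, α > 0, β > 0, if S ~ Weibull(k, λ), then E[ log g(S | α, β) ] = α log β − log Γ(α) + (α − 1)(log λ − γ/k) − β λ Γ(1 + 1/k), where g(S | α, β) = (β^α/Γ(α)) S^{α−1} e^{−βS} is the Gamma density and γ is the Euler–Mascheroni constant. -/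
open MeasureTheory Real Set

/-- The Weibull distribution `Weibull(k, lam)` as a measure on `ℝ`. -/
noncomputable def weibullMeasure (k lam : ℝ) : Measure ℝ :=
  MeasureTheory.volume.withDensity fun x => ENNReal.ofReal (weibullPDF k lam x)

lemma integral_exp_neg_log_aux : ∫ u in Ioi (0:ℝ), Real.exp (-u) * Real.log u
    = -Real.eulerMascheroniConstant := by
  have h1 := Complex.hasDerivAt_GammaIntegral (s := 1) (by simp)
  have heq : (∫ t : ℝ in Ioi 0, (t:ℂ) ^ ((1:ℂ) - 1) * (Real.log t * Real.exp (-t)))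
      = ((∫ u in Ioi (0:ℝ), Real.exp (-u) * Real.log u : ℝ) : ℂ) := by
    have hcast : ((∫ u in Ioi (0:ℝ), rexp (-u) * log u : ℝ) : ℂ)
        = ∫ u in Ioi (0:ℝ), ((rexp (-u) * log u : ℝ) : ℂ) := (integral_ofReal).symm
    rw [hcast]
    refine setIntegral_congr_fun measurableSet_Ioi fun t ht => ?_
    rw [sub_self, Complex.cpow_zero]
    push_cast
    ring
  rw [heq] at h1
  have hev : Complex.Gamma =ᶠ[nhds (1:ℂ)] Complex.GammaIntegral := by
    filter_upwards [IsOpen.mem_nhds (isOpen_lt continuous_const Complex.continuous_re)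
      (by norm_num : (0:ℝ) < (1:ℂ).re)] with s hs
    exact Complex.Gamma_eq_integral hs
  have h2 : HasDerivAt Complex.Gamma
      ((∫ u in Ioi (0:ℝ), Real.exp (-u) * Real.log u : ℝ) : ℂ) 1 :=
    h1.congr_of_eventuallyEq hev
  have h3 := h2.real_of_complex
  have h4 := h3.unique Real.hasDerivAt_Gamma_one
  simpa using h4

lemma integrable_exp_neg_log_aux :
    IntegrableOn (fun u => Real.exp (-u) * Real.log u) (Ioi (0:ℝ)) := by
  have h1 := Real.GammaIntegral_convergent (by norm_num : (0:ℝ) < 1/2)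
  have h2 := Real.GammaIntegral_convergent (by norm_num : (0:ℝ) < 3/2)
  refine Integrable.mono' ((h1.add h2).const_mul 2) ?_ ?_
  · exact (Real.measurable_exp.comp measurable_neg).aestronglyMeasurable.mul
      Real.measurable_log.aestronglyMeasurable |>.restrict
  · filter_upwards [ae_restrict_mem measurableSet_Ioi] with u hu
    have hu0 : (0:ℝ) < u := hu
    have hv : (0:ℝ) < u ^ ((1:ℝ)/2) := rpow_pos_of_pos hu0 _
    have hlog : |Real.log u| ≤ 2 * (u ^ ((1:ℝ)/2) + (u ^ ((1:ℝ)/2))⁻¹) := by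
      have h := Real.log_rpow hu0 ((1:ℝ)/2)
      have hup : Real.log (u ^ ((1:ℝ)/2)) ≤ u ^ ((1:ℝ)/2) - 1 :=
        Real.log_le_sub_one_of_pos hv
      have hdn : Real.log (u ^ ((1:ℝ)/2))⁻¹ ≤ (u ^ ((1:ℝ)/2))⁻¹ - 1 :=
        Real.log_le_sub_one_of_pos (by positivity)
      rw [Real.log_inv] at hdn
      rw [abs_le]
      constructor
      · nlinarith [Real.log_rpow hu0 ((1:ℝ)/2), inv_pos.mpr hv, hv]
      · nlinarith [Real.log_rpow hu0 ((1:ℝ)/2), inv_pos.mpr hv, hv]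
    have hinv : (u ^ ((1:ℝ)/2))⁻¹ = u ^ ((1:ℝ)/2 - 1) := by
      rw [← Real.rpow_neg hu0.le]
      norm_num
    have h32 : u ^ ((1:ℝ)/2) = u ^ ((3:ℝ)/2 - 1) := by norm_num
    rw [norm_mul, Real.norm_eq_abs, Real.norm_eq_abs, abs_of_pos (Real.exp_pos _)]
    calc Real.exp (-u) * |Real.log u|
        ≤ Real.exp (-u) * (2 * (u ^ ((1:ℝ)/2) + (u ^ ((1:ℝ)/2))⁻¹)) := by
          exact mul_le_mul_of_nonneg_left hlog (Real.exp_pos _).le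
      _ ≤ 2 * (Real.exp (-u) * u ^ ((1:ℝ)/2 - 1) + Real.exp (-u) * u ^ ((3:ℝ)/2 - 1)) := by
          rw [hinv, h32]
          have := (Real.exp_pos (-u)).le
          have := rpow_nonneg hu0.le ((1:ℝ)/2 - 1)
          have := rpow_nonneg hu0.le ((3:ℝ)/2 - 1)
          nlinarith

lemma weibull_sub_aux (k lam : ℝ) (hk : 0 < k) (hlam : 0 < lam) (f : ℝ → ℝ) :
    ∫ x in Ioi (0:ℝ), weibullPDF k lam x * f x
      = ∫ u in Ioi (0:ℝ), Real.exp (-u) * f (lam * u ^ (1/k)) := by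
  have hsub := integral_comp_rpow_Ioi_of_pos
    (g := fun y => Real.exp (-y) * f (lam * y ^ (1/k))) hk
  rw [← hsub]
  have hscale := integral_comp_mul_left_Ioi
    (g := fun y => weibullPDF k lam y * f y) 0 hlam
  rw [mul_zero] at hscale
  have hscale' : ∫ x in Ioi (0:ℝ), weibullPDF k lam x * f x
      = lam • ∫ x in Ioi (0:ℝ), weibullPDF k lam (lam * x) * f (lam * x) := by
    rw [hscale, smul_smul, mul_inv_cancel₀ hlam.ne', one_smul]
  rw [hscale', ← integral_smul]
  refine setIntegral_congr_fun measurableSet_Ioi fun x hx => ?_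
  have hx0 : (0:ℝ) < x := hx
  have hlx : (0:ℝ) < lam * x := by positivity
  have h1 : (x ^ k) ^ ((1:ℝ)/k) = x := by
    rw [← Real.rpow_mul hx0.le, mul_one_div, div_self hk.ne', Real.rpow_one]
  have h2 : lam * x / lam = x := by field_simp
  have h3 : (lam * x) ^ (k-1) = lam ^ (k-1) * x ^ (k-1) := Real.mul_rpow hlam.le hx0.le
  have h4 : lam ^ k = lam ^ (k-1) * lam := by
    rw [show k = (k-1)+1 by ring, Real.rpow_add_one hlam.ne']
    ring_nf
  have h5 : (0:ℝ) < lam ^ (k-1) := Real.rpow_pos_of_pos hlam _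
  simp only [weibullPDF, if_pos hlx, smul_eq_mul, h1, h2, h3, h4]
  field_simp

lemma weibull_integral_eq_aux (k lam : ℝ) (hk : 0 < k) (hlam : 0 < lam) (g : ℝ → ℝ) :
    ∫ x, g x ∂(weibullMeasure k lam) = ∫ x in Ioi (0:ℝ), weibullPDF k lam x * g x := by
  have hmeas : Measurable fun x => (weibullPDF k lam x).toNNReal := by
    apply Measurable.real_toNNReal
    unfold weibullPDF
    apply Measurable.ite measurableSet_Ioi _ measurable_const
    fun_prop
  have hnn : ∀ x, 0 ≤ weibullPDF k lam x := by
    intro x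
    unfold weibullPDF
    by_cases hx : 0 < x
    · rw [if_pos hx]; positivity
    · rw [if_neg hx]
  have h0 : weibullMeasure k lam
      = MeasureTheory.volume.withDensity fun x => ((weibullPDF k lam x).toNNReal : ENNReal) :=
    rfl
  rw [h0, integral_withDensity_eq_integral_smul hmeas]
  have h1 : (fun x => (weibullPDF k lam x).toNNReal • g x)
      = (Ioi 0).indicator (fun x => weibullPDF k lam x * g x) := by
    funext x
    have hs : (weibullPDF k lam x).toNNReal • g x = weibullPDF k lam x * g x := by
      rw [NNReal.smul_def, Real.coe_toNNReal _ (hnn x), smul_eq_mul]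
    by_cases hx : (0:ℝ) < x
    · rw [Set.indicator_of_mem (mem_Ioi.mpr hx), hs]
    · rw [Set.indicator_of_notMem (by simpa using hx), hs]
      simp [weibullPDF, if_neg hx]
  rw [h1, integral_indicator measurableSet_Ioi]

/-- Cross-entropy of the Weibull distribution against a Gamma density:
`E[log g(S | a, b)] = a log b − log Γ(a) + (a − 1)(log lam − γ/k) − b lam Γ(1 + 1/k)`. -/
theorem weibull_gamma_cross_entropy (k lam a b : ℝ) (hk : 0 < k) (hlam : 0 < lam)
    (ha : 0 < a) (hb : 0 < b) :
    ∫ x, Real.log (gammaPDF' a b x) ∂(weibullMeasure k lam)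
      = a * Real.log b - Real.log (Real.Gamma a)
          + (a - 1) * (Real.log lam - Real.eulerMascheroniConstant / k)
          - b * lam * Real.Gamma (1 + 1 / k) := by
  rw [weibull_integral_eq_aux k lam hk hlam, weibull_sub_aux k lam hk hlam]
  set C : ℝ := a * Real.log b - Real.log (Real.Gamma a) with hC
  have key : ∀ u ∈ Ioi (0:ℝ),
      Real.exp (-u) * Real.log (gammaPDF' a b (lam * u ^ (1/k)))
        = (C + (a-1) * Real.log lam) * Real.exp (-u)
            + ((a-1)/k) * (Real.exp (-u) * Real.log u)
            + (-(b*lam)) * (Real.exp (-u) * u ^ ((1 + 1/k) - 1)) := by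
    intro u hu
    have hu0 : (0:ℝ) < u := hu
    have hy : (0:ℝ) < lam * u ^ (1/k) := by positivity
    set y : ℝ := lam * u ^ (1/k) with hyd
    have hΓ : (0:ℝ) < Real.Gamma a := Real.Gamma_pos_of_pos ha
    have hba : (0:ℝ) < b ^ a := Real.rpow_pos_of_pos hb _
    have hya : (0:ℝ) < y ^ (a-1) := Real.rpow_pos_of_pos hy _
    have hlog : Real.log (gammaPDF' a b y)
        = (a * Real.log b - Real.log (Real.Gamma a)) + (a-1) * Real.log y - b * y := by
      rw [gammaPDF', if_pos hy, Real.log_mul (by positivity) (Real.exp_ne_zero _),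
        Real.log_mul (by positivity) hya.ne', Real.log_div hba.ne' hΓ.ne',
        Real.log_rpow hb, Real.log_rpow hy, Real.log_exp]
      ring
    have hlogy : Real.log y = Real.log lam + (1/k) * Real.log u := by
      rw [hyd, Real.log_mul hlam.ne' (Real.rpow_pos_of_pos hu0 _).ne', Real.log_rpow hu0]
    have hpow : u ^ ((1 + 1/k) - 1) = u ^ (1/k) := by norm_num
    rw [hlog, hlogy, hpow, hyd]
    ring
  rw [setIntegral_congr_fun measurableSet_Ioi key]
  have I1 : IntegrableOn (fun u => Real.exp (-u)) (Ioi (0:ℝ)) := by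
    have := Real.GammaIntegral_convergent (by norm_num : (0:ℝ) < 1)
    simpa using this
  have I2 := integrable_exp_neg_log_aux
  have I3 : IntegrableOn (fun u => Real.exp (-u) * u ^ ((1 + 1/k) - 1)) (Ioi (0:ℝ)) :=
    Real.GammaIntegral_convergent (by positivity)
  have J0 : Integrable (fun x => (C + (a-1) * Real.log lam) * Real.exp (-x))
      (volume.restrict (Ioi 0)) := I1.const_mul _
  have J1 : Integrable (fun x => ((a-1)/k) * (Real.exp (-x) * Real.log x))
      (volume.restrict (Ioi 0)) := I2.const_mul _
  have J01 : Integrable (fun x => (C + (a-1) * Real.log lam) * Real.exp (-x)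
      + ((a-1)/k) * (Real.exp (-x) * Real.log x)) (volume.restrict (Ioi 0)) := J0.add J1
  have J2 : Integrable (fun x => (-(b*lam)) * (Real.exp (-x) * x ^ ((1 + 1/k) - 1)))
      (volume.restrict (Ioi 0)) := I3.const_mul _
  rw [integral_add J01 J2, integral_add J0 J1,
    integral_const_mul, integral_const_mul, integral_const_mul,
    integral_exp_neg_Ioi_zero, integral_exp_neg_log_aux,
    ← Real.Gamma_eq_integral (by positivity : (0:ℝ) < 1 + 1/k)]
  field_simp
  ring
end
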